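/- Fix integers n ≥ 1 and d ≥ 2. Define polynomials in n variables by f_1 = x_1^d and f_i = x_{i-1} − x_i^d for i = 2, …, n, and set Φ(x) := max_{1≤i≤n} |f_i(x)| for x ∈ ℝ^n. Then for every real M < d^n and all constants C > 0 and ε > 0, there exists x ∈ ℝ^n with 0 < ‖x‖ < ε and Φ(x) < C·‖x‖^M. Equivalently, the Łojasiewicz exponent of f_1, …, f_n at the origin is at least d^n. (Concretely, along the curve p(t) = (t^(d^(n-1)), t^(d^(n-2)), …, t) one has f_i(p(t)) = 0 for i ≥ 2 and f_1(p(t)) = t^(d^n).) -/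

import Mathlib

/-- **The Łojasiewicz exponent of the worst-case example is at least `d^n`.**
For `n ≥ 1`, `d ≥ 2` let `f 1 = x₁^d` and `f i = x_{i-1} - x_i^d` for `2 ≤ i ≤ n` (indexed
here by `Fin n`), and `Φ x = max_i |f i x|`.  Then for every real `M < d^n` and all
`C, ε > 0` there is `x` with `0 < ‖x‖ < ε` and `Φ x < C * ‖x‖ ^ M`. -/
theorem worst_example_lojasiewicz_exponent
    (n d : ℕ) (hn : 1 ≤ n) (hd : 2 ≤ d)
    (f : Fin n → MvPolynomial (Fin n) ℝ)
    (hf : ∀ i : Fin n, f i = if _ : (i : ℕ) = 0 then MvPolynomial.X i ^ d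
      else MvPolynomial.X (⟨(i : ℕ) - 1, lt_of_le_of_lt (Nat.sub_le _ _) i.isLt⟩ : Fin n)
        - MvPolynomial.X i ^ d) :
    ∀ M : ℝ, M < (d : ℝ) ^ n → ∀ C > (0 : ℝ), ∀ ε > (0 : ℝ),
      ∃ x : EuclideanSpace ℝ (Fin n), 0 < ‖x‖ ∧ ‖x‖ < ε ∧
        Finset.univ.sup' ⟨⟨0, hn⟩, Finset.mem_univ _⟩
            (fun i => |MvPolynomial.eval (fun j => x j) (f i)|)
          < C * ‖x‖ ^ M := by
  intro M hM C hC ε hε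
  set D : ℝ := (d : ℝ) ^ n with hD
  set M₀ : ℝ := max M 0 with hM₀
  have hDpos : (0:ℝ) < D := by positivity
  have hM₀lt : M₀ < D := max_lt hM hDpos
  set e : ℝ := D - M₀ with he
  have hepos : (0:ℝ) < e := by simp [he]; linarith
  set s : ℝ := Real.sqrt n + 1 with hs
  have hspos : (0:ℝ) < s := by positivity
  have hsq : Real.sqrt n < s := by simp [hs]
  -- choose t
  set t : ℝ := min (min (ε / s) (1 / s)) (min (C ^ e⁻¹) 1) / 2 with htdef
  have hCe : (0:ℝ) < C ^ e⁻¹ := Real.rpow_pos_of_pos hC _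
  have ht0 : 0 < t := by
    have : 0 < ε / s := div_pos hε hspos
    have : 0 < (1:ℝ) / s := div_pos one_pos hspos
    positivity
  have ht1 : t < 1 := by
    have h1 : t ≤ 1 / 2 := by
      have : min (min (ε / s) (1 / s)) (min (C ^ e⁻¹) 1) ≤ 1 :=
        le_trans (min_le_right _ _) (min_le_right _ _)
      rw [htdef]; linarith
    linarith
  have htε : s * t < ε := by
    have h1 : t ≤ ε / s / 2 := by
      have : min (min (ε / s) (1 / s)) (min (C ^ e⁻¹) 1) ≤ ε / s :=
        le_trans (min_le_left _ _) (min_le_left _ _)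
      rw [htdef]; linarith
    calc s * t ≤ s * (ε / s / 2) := by nlinarith
      _ = ε / 2 := by field_simp
      _ < ε := by linarith
  have hts1 : s * t < 1 := by
    have h1 : t ≤ 1 / s / 2 := by
      have : min (min (ε / s) (1 / s)) (min (C ^ e⁻¹) 1) ≤ 1 / s :=
        le_trans (min_le_left _ _) (min_le_right _ _)
      rw [htdef]; linarith
    calc s * t ≤ s * (1 / s / 2) := by nlinarith
      _ = 1 / 2 := by field_simp
      _ < 1 := by norm_num
  have hteC : t ^ e < C := by
    have h1 : t < C ^ e⁻¹ := by
      have : min (min (ε / s) (1 / s)) (min (C ^ e⁻¹) 1) ≤ C ^ e⁻¹ :=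
        le_trans (min_le_right _ _) (min_le_left _ _)
      rw [htdef]; linarith
    have := Real.rpow_lt_rpow (le_of_lt ht0) h1 hepos
    rwa [← Real.rpow_mul (le_of_lt hC), inv_mul_cancel₀ (ne_of_gt hepos),
      Real.rpow_one] at this
  -- the point
  set x : EuclideanSpace ℝ (Fin n) := WithLp.toLp 2 (fun j : Fin n => t ^ (d ^ (n - 1 - (j:ℕ)))) with hx
  have hxj : ∀ j : Fin n, x j = t ^ (d ^ (n - 1 - (j:ℕ))) := fun j => rfl
  -- coordinate bounds
  have hcoord_le : ∀ j : Fin n, x j ≤ t := by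
    intro j
    rw [hxj]
    have h1le : 1 ≤ d ^ (n - 1 - (j:ℕ)) :=
      Nat.one_le_iff_ne_zero.mpr (pow_ne_zero _ (by omega))
    simpa using pow_le_pow_of_le_one (le_of_lt ht0) (le_of_lt ht1) h1le
  have hcoord_pos : ∀ j : Fin n, 0 < x j := by
    intro j; rw [hxj]; positivity
  -- norm bounds
  have hlast : x ⟨n - 1, by omega⟩ = t := by
    rw [hxj]; simp
  have hnorm_ge : t ≤ ‖x‖ := by
    rw [EuclideanSpace.norm_eq]
    have h1 : t ^ 2 ≤ ∑ j : Fin n, ‖x j‖ ^ 2 := by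
      have := Finset.single_le_sum (f := fun j : Fin n => ‖x j‖ ^ 2)
        (fun j _ => by positivity) (Finset.mem_univ ⟨n - 1, by omega⟩)
      calc t ^ 2 = ‖x ⟨n - 1, by omega⟩‖ ^ 2 := by
            rw [hlast, Real.norm_eq_abs, abs_of_pos ht0]
        _ ≤ _ := this
    calc t = Real.sqrt (t ^ 2) := (Real.sqrt_sq (le_of_lt ht0)).symm
      _ ≤ _ := Real.sqrt_le_sqrt h1
  have hnorm_le : ‖x‖ ≤ Real.sqrt n * t := by
    rw [EuclideanSpace.norm_eq]
    have h1 : ∑ j : Fin n, ‖x j‖ ^ 2 ≤ n * t ^ 2 := by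
      calc ∑ j : Fin n, ‖x j‖ ^ 2 ≤ ∑ _j : Fin n, t ^ 2 := by
            apply Finset.sum_le_sum
            intro j _
            rw [Real.norm_eq_abs, abs_of_pos (hcoord_pos j)]
            exact pow_le_pow_left₀ (le_of_lt (hcoord_pos j)) (hcoord_le j) 2
        _ = n * t ^ 2 := by simp [Finset.sum_const, mul_comm]
    calc Real.sqrt (∑ j : Fin n, ‖x j‖ ^ 2) ≤ Real.sqrt (n * t ^ 2) :=
          Real.sqrt_le_sqrt h1
      _ = Real.sqrt n * t := by
          rw [Real.sqrt_mul (by positivity), Real.sqrt_sq (le_of_lt ht0)]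
  have hnorm_pos : 0 < ‖x‖ := lt_of_lt_of_le ht0 hnorm_ge
  have hnorm_lt1 : ‖x‖ < 1 :=
    lt_of_le_of_lt hnorm_le (lt_of_le_of_lt (by nlinarith [Real.sqrt_nonneg (n:ℝ)]) hts1)
  have hnorm_ltε : ‖x‖ < ε :=
    lt_of_le_of_lt hnorm_le (lt_of_le_of_lt (by nlinarith [Real.sqrt_nonneg (n:ℝ)]) htε)
  refine ⟨x, hnorm_pos, hnorm_ltε, ?_⟩
  -- RHS positive
  have hRHS : 0 < C * ‖x‖ ^ M := by positivity
  refine (Finset.sup'_lt_iff _).mpr ?_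
  intro i _
  rw [hf i]
  by_cases hi : (i : ℕ) = 0
  · rw [dif_pos hi]
    have hev : MvPolynomial.eval (fun j => x j) (MvPolynomial.X i ^ d) = t ^ (d ^ n) := by
      simp only [map_pow, MvPolynomial.eval_X]
      rw [hxj, ← pow_mul]
      congr 1
      have : n - 1 - (i:ℕ) = n - 1 := by omega
      rw [this, ← pow_succ]
      congr 1
      omega
    rw [hev, abs_of_pos (by positivity)]
    -- key inequality
    have h1 : t ^ (d ^ n) = t ^ M₀ * t ^ e := by
      rw [← Real.rpow_add ht0]
      have : M₀ + e = D := by simp [he]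
      rw [this, hD]
      rw [← Real.rpow_natCast t (d ^ n)]
      congr 1
      push_cast
      ring
    rw [h1]
    have h2 : t ^ M₀ ≤ ‖x‖ ^ M₀ :=
      Real.rpow_le_rpow (le_of_lt ht0) hnorm_ge (le_max_right M 0)
    have h3 : ‖x‖ ^ M₀ ≤ ‖x‖ ^ M :=
      Real.rpow_le_rpow_of_exponent_ge hnorm_pos (le_of_lt hnorm_lt1) (le_max_left M 0)
    have h4 : t ^ M₀ ≤ ‖x‖ ^ M := le_trans h2 h3
    calc t ^ M₀ * t ^ e ≤ ‖x‖ ^ M * t ^ e := by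
          apply mul_le_mul_of_nonneg_right h4
          positivity
      _ < ‖x‖ ^ M * C := by
          apply mul_lt_mul_of_pos_left hteC
          positivity
      _ = C * ‖x‖ ^ M := mul_comm _ _
  · rw [dif_neg hi]
    have hev : MvPolynomial.eval (fun j => x j)
        (MvPolynomial.X (⟨(i : ℕ) - 1, lt_of_le_of_lt (Nat.sub_le _ _) i.isLt⟩ : Fin n)
          - MvPolynomial.X i ^ d) = 0 := by
      simp only [map_sub, map_pow, MvPolynomial.eval_X]
      rw [hxj, hxj, ← pow_mul, sub_eq_zero]
      congr 1
      rw [← pow_succ]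
      congr 1
      simp only [Fin.val_mk]
      have h1 : 1 ≤ (i:ℕ) := by omega
      have h2 : (i:ℕ) < n := i.isLt
      omega
    rw [hev]
    simpa using hRHS
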